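/- If e_i is an eigenvector of a symmetric endomorphism S with eigenvalue κ_i, then e_i is an eigenvector of the Newton transformation P_k = Σ_{j=0}^k (−1)^j s_{k−j} S^j with eigenvalue μ_{i,k} = Σ_{i_1<...<i_k, i_j ≠ i} κ_{i_1}···κ_{i_k}, the k-th elementary symmetric function of the eigenvalues other than κ_i. -/

import Mathlib

open Finset

/-- The `k`-th elementary symmetric function of `κ₁, …, κₙ`. -/
noncomputable def esymm (n : ℕ) (κ : Fin n → ℝ) (k : ℕ) : ℝ :=
  ∑ s ∈ (Finset.univ : Finset (Fin n)).powersetCard k, ∏ i ∈ s, κ i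

lemma esymm_erase (n : ℕ) (κ : Fin n → ℝ) (i : Fin n) (m : ℕ) :
    esymm n κ (m + 1) =
      (∑ s ∈ (Finset.univ.erase i).powersetCard (m + 1), ∏ j ∈ s, κ j)
        + κ i * ∑ s ∈ (Finset.univ.erase i).powersetCard m, ∏ j ∈ s, κ j := by
  have h : (Finset.univ : Finset (Fin n)) = insert i (Finset.univ.erase i) := by simp
  have hni : i ∉ Finset.univ.erase i := Finset.notMem_erase i _
  have hmem : ∀ t ∈ (Finset.univ.erase i).powersetCard m, i ∉ t := by
    intro t ht h'
    exact hni ((Finset.mem_powersetCard.1 ht).1 h')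
  have hdisj : Disjoint ((Finset.univ.erase i).powersetCard (m + 1))
      (((Finset.univ.erase i).powersetCard m).image (insert i)) := by
    rw [Finset.disjoint_left]
    intro t ht ht'
    obtain ⟨u, hu, rfl⟩ := Finset.mem_image.1 ht'
    exact hni ((Finset.mem_powersetCard.1 ht).1 (Finset.mem_insert_self i u))
  have hinj : ∀ t1 ∈ (Finset.univ.erase i).powersetCard m,
      ∀ t2 ∈ (Finset.univ.erase i).powersetCard m, insert i t1 = insert i t2 → t1 = t2 := by
    intro t1 h1 t2 h2 heq
    rw [← Finset.erase_insert (hmem t1 h1), heq, Finset.erase_insert (hmem t2 h2)]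
  rw [esymm]
  conv_lhs => rw [h]
  rw [Finset.powersetCard_succ_insert hni, Finset.sum_union hdisj, Finset.sum_image hinj]
  congr 1
  rw [Finset.mul_sum]
  refine Finset.sum_congr rfl fun t ht => ?_
  rw [Finset.prod_insert (hmem t ht)]

lemma newton_id (n : ℕ) (κ : Fin n → ℝ) (i : Fin n) (k : ℕ) :
    ∑ j ∈ Finset.range (k + 1), (-1 : ℝ) ^ j * esymm n κ (k - j) * (κ i) ^ j
      = ∑ s ∈ (Finset.univ.erase i).powersetCard k, ∏ j ∈ s, κ j := by
  induction k with
  | zero => simp [esymm]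
  | succ k ih =>
    rw [Finset.sum_range_succ']
    have h1 : ∀ j ∈ Finset.range (k + 1),
        (-1 : ℝ) ^ (j + 1) * esymm n κ (k + 1 - (j + 1)) * (κ i) ^ (j + 1)
          = (-(κ i)) * ((-1 : ℝ) ^ j * esymm n κ (k - j) * (κ i) ^ j) := by
      intro j _
      rw [Nat.succ_sub_succ, pow_succ, pow_succ]
      ring
    rw [Finset.sum_congr rfl h1, ← Finset.mul_sum, ih]
    have h2 := esymm_erase n κ i k
    simp only [Nat.sub_zero, pow_zero, one_mul, mul_one]
    rw [h2]
    ring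

/-- If `e_i` is an eigenvector of the symmetric endomorphism `S` with eigenvalue `κ_i`
(for an orthonormal eigenbasis `e₁, …, eₙ`), then `e_i` is an eigenvector of the Newton
transformation `P_k = Σ_{j=0}^k (−1)^j s_{k−j} S^j` with eigenvalue
`μ_{i,k} = Σ_{i₁<⋯<i_k, i_j ≠ i} κ_{i₁} ⋯ κ_{i_k}`. -/
theorem newton_eigenvector {E : Type*} [NormedAddCommGroup E]
    [InnerProductSpace ℝ E] [FiniteDimensional ℝ E] (n : ℕ)
    (hdim : Module.finrank ℝ E = n) (k : ℕ) (hk : k ≤ n - 1)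
    (S : E →ₗ[ℝ] E) (hS : LinearMap.IsSymmetric S)
    (b : OrthonormalBasis (Fin n) ℝ E) (κ : Fin n → ℝ)
    (hb : ∀ i, S (b i) = κ i • b i) (i : Fin n) :
    (∑ j ∈ Finset.range (k + 1), ((-1 : ℝ) ^ j * esymm n κ (k - j)) • S ^ j) (b i) =
      (∑ s ∈ (Finset.univ.erase i).powersetCard k, ∏ j ∈ s, κ j) • b i := by
  have hpow : ∀ j : ℕ, (S ^ j) (b i) = (κ i) ^ j • b i := by
    intro j
    induction j with
    | zero => simp
    | succ j ih =>
      rw [pow_succ', Module.End.mul_apply, ih, map_smul, hb, smul_smul, pow_succ]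
  rw [LinearMap.sum_apply]
  simp_rw [LinearMap.smul_apply, hpow, smul_smul]
  rw [← Finset.sum_smul, ← newton_id n κ i k]
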